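/- Let (M, N, i, π, h) be a contraction of cochain complexes of K-vector spaces satisfying the side conditions h ∘ i = 0 and π ∘ h = 0, and define the degree −1 graded map h₂ := −h ∘ d_N ∘ h. Then (M, N, i, π, h₂) is again a contraction (i.e. i ∘ π − id_N = d_N ∘ h₂ + h₂ ∘ d_N), and it satisfies all three side conditions π ∘ h₂ = 0, h₂ ∘ i = 0 and h₂ ∘ h₂ = 0. -/
import Mathlib


open CategoryTheory CategoryTheory.Limits CategoryTheory.Preadditive

/-- The degree `-1` map `h₂ := -(h ∘ d_N ∘ h)`, encoded as a family of maps
`N.X p ⟶ N.X q`. -/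
noncomputable def hTwo {K : Type} [Field K]
    (N : CochainComplex (ModuleCat K) ℤ)
    (h : ∀ p q : ℤ, N.X p ⟶ N.X q) (p q : ℤ) : N.X p ⟶ N.X q :=
  -(h p (p - 1) ≫ N.d (p - 1) p ≫ h p q)

/-- The key algebraic identities: with `A = h ∘ d` and `B = d ∘ h` in degree `n`,
we have `A ≫ A = -A`, `B ≫ B = -B` and `B ≫ A = 0`. -/
lemma stmt5_aux {K : Type} [Field K]
    (M N : CochainComplex (ModuleCat K) ℤ)
    (i : M ⟶ N) (π : N ⟶ M)
    (h : ∀ p q : ℤ, N.X p ⟶ N.X q)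
    (h_retract : i ≫ π = 𝟙 M)
    (h_htpy : ∀ n : ℤ,
      π.f n ≫ i.f n - 𝟙 (N.X n) =
        h n (n - 1) ≫ N.d (n - 1) n + N.d n (n + 1) ≫ h (n + 1) n)
    (h_hi : ∀ n : ℤ, i.f n ≫ h n (n - 1) = 0)
    (h_πh : ∀ n : ℤ, h n (n - 1) ≫ π.f (n - 1) = 0) (n : ℤ) :
    (h n (n - 1) ≫ N.d (n - 1) n) ≫ (h n (n - 1) ≫ N.d (n - 1) n)
        = -(h n (n - 1) ≫ N.d (n - 1) n) ∧
    (N.d n (n + 1) ≫ h (n + 1) n) ≫ (N.d n (n + 1) ≫ h (n + 1) n)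
        = -(N.d n (n + 1) ≫ h (n + 1) n) ∧
    (N.d n (n + 1) ≫ h (n + 1) n) ≫ (h n (n - 1) ≫ N.d (n - 1) n) = 0 := by
  set A : N.X n ⟶ N.X n := h n (n - 1) ≫ N.d (n - 1) n with hA
  set B : N.X n ⟶ N.X n := N.d n (n + 1) ≫ h (n + 1) n with hB
  have he : i.f n ≫ π.f n = 𝟙 (M.X n) := by
    rw [← HomologicalComplex.comp_f, h_retract, HomologicalComplex.id_f]
  have hsum : π.f n ≫ i.f n - 𝟙 (N.X n) = A + B := h_htpy n
  have hAB : A ≫ B = 0 := by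
    rw [hA, hB, Category.assoc, ← Category.assoc (N.d (n - 1) n),
      HomologicalComplex.d_comp_d, zero_comp, comp_zero]
  -- (A + B) ≫ A = -A
  have hA2 : (A + B) ≫ A = -A := by
    have h5 : (π.f n ≫ i.f n - 𝟙 (N.X n)) ≫ h n (n - 1) = -h n (n - 1) := by
      rw [sub_comp, Category.assoc, h_hi n, comp_zero, Category.id_comp, zero_sub]
    rw [hsum] at h5
    calc (A + B) ≫ A = ((A + B) ≫ h n (n - 1)) ≫ N.d (n - 1) n := by
          simp only [hA, Category.assoc]
      _ = -A := by rw [h5, neg_comp, hA]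
  -- B ≫ (A + B) = -B
  have hπh' : h (n + 1) n ≫ π.f n = 0 := by
    have := h_πh (n + 1)
    rwa [add_sub_cancel_right] at this
  have hB2 : B ≫ (A + B) = -B := by
    have h5 : h (n + 1) n ≫ (π.f n ≫ i.f n - 𝟙 (N.X n)) = -h (n + 1) n := by
      rw [comp_sub, ← Category.assoc, hπh', zero_comp, Category.comp_id, zero_sub]
    rw [hsum] at h5
    calc B ≫ (A + B) = N.d n (n + 1) ≫ (h (n + 1) n ≫ (A + B)) := by
          rw [hB, Category.assoc]
      _ = -B := by rw [h5, comp_neg, hB]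
  -- (A + B) ≫ (A + B) = -(A + B)
  have hsq : (A + B) ≫ (A + B) = -(A + B) := by
    rw [← hsum]
    have hee : (π.f n ≫ i.f n) ≫ (π.f n ≫ i.f n) = π.f n ≫ i.f n := by
      rw [Category.assoc, ← Category.assoc (i.f n), he, Category.id_comp]
    rw [sub_comp, comp_sub, comp_sub, hee, Category.comp_id, Category.id_comp,
      Category.comp_id]
    abel
  have hexp : A ≫ A + A ≫ B + B ≫ A + B ≫ B = -(A + B) := by
    rw [← hsq, add_comp, comp_add, comp_add]
    abel
  have hA2' : A ≫ A + B ≫ A = -A := by rw [← hA2, add_comp]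
  have hB2' : B ≫ A + B ≫ B = -B := by rw [← hB2, comp_add]
  have hBA : B ≫ A = 0 := by
    have : (A ≫ A + B ≫ A) + (B ≫ A + B ≫ B) - (A ≫ A + A ≫ B + B ≫ A + B ≫ B)
        + A ≫ B = B ≫ A := by abel
    rw [hA2', hB2', hexp, hAB] at this
    rw [← this]
    abel
  have hAA : A ≫ A = -A := by
    have := hA2'
    rw [hBA, add_zero] at this
    exact this
  have hBB : B ≫ B = -B := by
    have := hB2'
    rw [hBA, zero_add] at this
    exact this
  exact ⟨hAA, hBB, hBA⟩

/-- Let `(M, N, i, π, h)` be a contraction of cochain complexes of `K`-vector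
spaces satisfying the side conditions `h ∘ i = 0` and `π ∘ h = 0`, and set
`h₂ := -h ∘ d_N ∘ h`.  Then `h₂` is again of degree `-1`, `(M, N, i, π, h₂)`
is again a contraction, and it satisfies all three side conditions
`π ∘ h₂ = 0`, `h₂ ∘ i = 0` and `h₂ ∘ h₂ = 0`. -/
theorem stmt5 {K : Type} [Field K]
    (M N : CochainComplex (ModuleCat K) ℤ)
    (i : M ⟶ N) (π : N ⟶ M)
    (h : ∀ p q : ℤ, N.X p ⟶ N.X q)
    (h_deg : ∀ p q : ℤ, q ≠ p - 1 → h p q = 0)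
    (h_retract : i ≫ π = 𝟙 M)
    (h_htpy : ∀ n : ℤ,
      π.f n ≫ i.f n - 𝟙 (N.X n) =
        h n (n - 1) ≫ N.d (n - 1) n + N.d n (n + 1) ≫ h (n + 1) n)
    (h_hi : ∀ n : ℤ, i.f n ≫ h n (n - 1) = 0)
    (h_πh : ∀ n : ℤ, h n (n - 1) ≫ π.f (n - 1) = 0) :
    (∀ p q : ℤ, q ≠ p - 1 → hTwo N h p q = 0) ∧
    (∀ n : ℤ,
      π.f n ≫ i.f n - 𝟙 (N.X n) =
        hTwo N h n (n - 1) ≫ N.d (n - 1) n + N.d n (n + 1) ≫ hTwo N h (n + 1) n) ∧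
    (∀ n : ℤ, hTwo N h n (n - 1) ≫ π.f (n - 1) = 0) ∧
    (∀ n : ℤ, i.f n ≫ hTwo N h n (n - 1) = 0) ∧
    (∀ n : ℤ, hTwo N h n (n - 1) ≫ hTwo N h (n - 1) (n - 2) = 0) := by
  refine ⟨?_, ?_, ?_, ?_, ?_⟩
  · intro p q hq
    rw [hTwo, h_deg p q hq, comp_zero, comp_zero, neg_zero]
  · intro n
    obtain ⟨hAA, hBB, _⟩ := stmt5_aux M N i π h h_retract h_htpy h_hi h_πh n
    have e1 : hTwo N h n (n - 1) ≫ N.d (n - 1) n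
        = -((h n (n - 1) ≫ N.d (n - 1) n) ≫ (h n (n - 1) ≫ N.d (n - 1) n)) := by
      simp only [hTwo, neg_comp, Category.assoc]
    have e2 : N.d n (n + 1) ≫ hTwo N h (n + 1) n
        = -((N.d n (n + 1) ≫ h (n + 1) n) ≫ (N.d n (n + 1) ≫ h (n + 1) n)) := by
      rw [hTwo, Int.add_sub_cancel]
      simp only [comp_neg, neg_comp, Category.assoc]
    rw [e1, e2, hAA, hBB, neg_neg, neg_neg, h_htpy n]
  · intro n
    rw [hTwo, neg_comp, Category.assoc, Category.assoc, h_πh n, comp_zero,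
      comp_zero, neg_zero]
  · intro n
    rw [hTwo, comp_neg, ← Category.assoc, h_hi n, zero_comp, neg_zero]
  · intro n
    obtain ⟨_, _, hBA⟩ := stmt5_aux M N i π h h_retract h_htpy h_hi h_πh (n - 1)
    rw [sub_add_cancel] at hBA
    have hidx : n - 1 - 1 = n - 2 := by ring
    rw [hidx] at hBA
    rw [hTwo, hTwo, hidx, neg_comp, comp_neg, neg_neg]
    calc h n (n - 1) ≫ N.d (n - 1) n ≫ h n (n - 1) ≫
            (h (n - 1) (n - 2) ≫ N.d (n - 2) (n - 1) ≫ h (n - 1) (n - 2))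
        = h n (n - 1) ≫ ((N.d (n - 1) n ≫ h n (n - 1)) ≫
            (h (n - 1) (n - 2) ≫ N.d (n - 2) (n - 1))) ≫ h (n - 1) (n - 2) := by
          simp only [Category.assoc]
      _ = 0 := by rw [hBA, zero_comp, comp_zero]
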